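/- For all u, w ∈ (0,1) with u ≠ w, one has (1/2)·(u−w)·(J(w)−J(u)) ≥ |u−w| · J(L⁻¹((H₂(u)+H₂(w))/|u−w|)); that is, κ(u,w) ≥ 0 for all u,w ∈ (0,1). -/

import Mathlib

/-- Binary entropy function. -/
noncomputable def H2 (x : ℝ) : ℝ := -x * Real.logb 2 x - (1 - x) * Real.logb 2 (1 - x)

/-- `J`, the derivative of the binary entropy function. -/
noncomputable def J (x : ℝ) : ℝ := Real.logb 2 ((1 - x) / x)

/-- `L(u) = 2·H₂(u)/(1 − 2u)` for `u ∈ [0,1/2)` (with `L(0) = 0`). -/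
noncomputable def L (u : ℝ) : ℝ := 2 * H2 u / (1 - 2 * u)

/-- `L⁻¹ : [0,∞) → [0,1/2)`, the inverse of `L`. -/
noncomputable def Linv : ℝ → ℝ := Function.invFunOn L (Set.Ico 0 (1 / 2))

/-- The function `κ`. -/
noncomputable def kappa (u w : ℝ) : ℝ :=
  if u = w then 0
  else (u - w) * (J w - J u) / 2 - |u - w| * J (Linv ((H2 u + H2 w) / |u - w|))


lemma st18_log_aux {z : ℝ} (hz : 0 < z) : z / (1 + z) ≤ Real.log (1 + z) := by
  have h1 : (0:ℝ) < 1 + z := by linarith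
  have h := Real.log_le_sub_one_of_pos (x := (1+z)⁻¹) (by positivity)
  rw [Real.log_inv] at h
  have h2 : (1+z)⁻¹ - 1 = -(z/(1+z)) := by field_simp; ring
  rw [h2] at h; linarith

noncomputable def stg (t : ℝ) : ℝ := Real.log (1 + Real.exp t) - t * Real.exp t / (1 + Real.exp t)
noncomputable def stg1 (t : ℝ) : ℝ := -(t * Real.exp t) / (1 + Real.exp t)^2
noncomputable def stg2 (t : ℝ) : ℝ :=
  Real.exp t * (t * (Real.exp t - 1) - (1 + Real.exp t)) / (1 + Real.exp t)^3

lemma st_hg (t : ℝ) : HasDerivAt stg (stg1 t) t := by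
  have hpos : (0:ℝ) < 1 + Real.exp t := by positivity
  have h1 : HasDerivAt (fun t : ℝ => 1 + Real.exp t) (Real.exp t) t :=
    (Real.hasDerivAt_exp t).const_add 1
  have hlog : HasDerivAt (fun t : ℝ => Real.log (1 + Real.exp t))
      (Real.exp t / (1 + Real.exp t)) t := h1.log (ne_of_gt hpos)
  have hnum : HasDerivAt (fun t : ℝ => t * Real.exp t)
      (1 * Real.exp t + t * Real.exp t) t := (hasDerivAt_id t).mul (Real.hasDerivAt_exp t)
  have hfrac : HasDerivAt (fun t : ℝ => t * Real.exp t / (1 + Real.exp t))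
      (((1 * Real.exp t + t * Real.exp t) * (1 + Real.exp t) - t * Real.exp t * Real.exp t)
        / (1 + Real.exp t)^2) t := hnum.div h1 (ne_of_gt hpos)
  have := hlog.sub hfrac
  refine this.congr_deriv ?_
  rw [stg1]; field_simp; ring

lemma st_hg1 (t : ℝ) : HasDerivAt stg1 (stg2 t) t := by
  have hpos : (0:ℝ) < 1 + Real.exp t := by positivity
  have h1 : HasDerivAt (fun t : ℝ => 1 + Real.exp t) (Real.exp t) t :=
    (Real.hasDerivAt_exp t).const_add 1
  have hnum : HasDerivAt (fun t : ℝ => -(t * Real.exp t))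
      (-(1 * Real.exp t + t * Real.exp t)) t :=
    ((hasDerivAt_id t).mul (Real.hasDerivAt_exp t)).neg
  have hden : HasDerivAt (fun t : ℝ => (1 + Real.exp t)^2)
      (2 * (1 + Real.exp t)^1 * Real.exp t) t := h1.pow 2
  have := hnum.div hden (by positivity)
  refine this.congr_deriv ?_
  rw [stg2]; field_simp; ring


lemma stg_even (t : ℝ) : stg (-t) = stg t := by
  have h1 : (0:ℝ) < Real.exp t := Real.exp_pos t
  have h2 : 1 + Real.exp (-t) = (1 + Real.exp t) / Real.exp t := by
    rw [Real.exp_neg]; field_simp; ring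
  rw [stg, stg, h2, Real.log_div (by positivity) (ne_of_gt h1), Real.log_exp, Real.exp_neg]
  field_simp
  ring

lemma stg1_odd (t : ℝ) : stg1 (-t) = -stg1 t := by
  have h1 : (0:ℝ) < Real.exp t := Real.exp_pos t
  have h1 : (0:ℝ) < Real.exp t := Real.exp_pos t
  have hne : (1 + Real.exp t) ≠ 0 := by positivity
  rw [stg1, stg1, Real.exp_neg]
  field_simp
  ring

-- A1 : α - δ ≥ 0
lemma st_A1 (t : ℝ) : 0 ≤ (2 * stg2 t * Real.cosh (t/2) + 2 * stg1 t * Real.sinh (t/2)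
    + stg t * Real.cosh (t/2)) - (2 * stg1 t * Real.cosh (t/2) + stg t * Real.sinh (t/2)) := by
  have hE : (0:ℝ) < Real.exp (t/2) := Real.exp_pos _
  have hy : (0:ℝ) < Real.exp t := Real.exp_pos t
  have hsq : Real.exp (t/2) * Real.exp (t/2) = Real.exp t := by
    rw [← Real.exp_add]; norm_num
  have key := st18_log_aux hy
  have h1 : (2 * stg2 t * Real.cosh (t/2) + 2 * stg1 t * Real.sinh (t/2)
      + stg t * Real.cosh (t/2)) - (2 * stg1 t * Real.cosh (t/2) + stg t * Real.sinh (t/2))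
      = (Real.log (1 + Real.exp t) - Real.exp t / (1 + Real.exp t)) / Real.exp (t/2) := by
    rw [stg, stg1, stg2, Real.cosh_eq, Real.sinh_eq, Real.exp_neg, ← hsq]
    field_simp
    ring
  rw [h1]
  apply div_nonneg _ hE.le
  linarith

lemma st_A2 (t : ℝ) : 0 ≤ (2 * stg2 t * Real.cosh (t/2) + 2 * stg1 t * Real.sinh (t/2)
    + stg t * Real.cosh (t/2)) + (2 * stg1 t * Real.cosh (t/2) + stg t * Real.sinh (t/2)) := by
  have hE : (0:ℝ) < Real.exp (t/2) := Real.exp_pos _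
  have hy : (0:ℝ) < Real.exp t := Real.exp_pos t
  have hy' : (0:ℝ) < Real.exp (-t) := Real.exp_pos _
  have hsq : Real.exp (t/2) * Real.exp (t/2) = Real.exp t := by
    rw [← Real.exp_add]; norm_num
  have hlogsplit : Real.log (1 + Real.exp t) = t + Real.log (1 + Real.exp (-t)) := by
    have h : Real.exp t * (1 + Real.exp (-t)) = 1 + Real.exp t := by
      rw [Real.exp_neg]; field_simp; ring
    rw [← h, Real.log_mul (ne_of_gt hy) (by positivity), Real.log_exp]
  have key := st18_log_aux hy'
  have hfr : Real.exp (-t) / (1 + Real.exp (-t)) = 1 / (1 + Real.exp t) := by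
    rw [Real.exp_neg]; field_simp; ring
  have key2 : 1 / (1 + Real.exp t) ≤ Real.log (1 + Real.exp t) - t := by
    rw [hlogsplit, ← hfr]; linarith
  have h1 : (2 * stg2 t * Real.cosh (t/2) + 2 * stg1 t * Real.sinh (t/2)
      + stg t * Real.cosh (t/2)) + (2 * stg1 t * Real.cosh (t/2) + stg t * Real.sinh (t/2))
      = (Real.log (1 + Real.exp t) - t - 1 / (1 + Real.exp t)) * Real.exp (t/2) := by
    rw [stg, stg1, stg2, Real.cosh_eq, Real.sinh_eq, Real.exp_neg, ← hsq]
    field_simp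
    ring
  rw [h1]
  apply mul_nonneg _ hE.le
  linarith


lemma st_term (t u : ℝ) : 0 ≤ 2 * stg2 t * (Real.cosh (t/2) * Real.cosh (u/2))
    + 2 * stg1 t * (Real.sinh (t/2) * Real.cosh (u/2) + Real.cosh (t/2) * Real.sinh (u/2))
    + stg t * (Real.cosh (t/2) * Real.cosh (u/2) + Real.sinh (t/2) * Real.sinh (u/2)) := by
  have hY1 : 0 < Real.cosh (u/2) - Real.sinh (u/2) := by
    rw [Real.cosh_sub_sinh]; exact Real.exp_pos _
  have hY2 : 0 < Real.cosh (u/2) + Real.sinh (u/2) := by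
    rw [Real.cosh_add_sinh]; exact Real.exp_pos _
  nlinarith [mul_nonneg (st_A1 t) hY1.le, mul_nonneg (st_A2 t) hY2.le]

noncomputable def stF (τ c : ℝ) : ℝ := (stg (c - τ) + stg (c + τ)) * (Real.cosh c + Real.cosh τ)
noncomputable def stF1 (τ c : ℝ) : ℝ :=
  (stg1 (c - τ) + stg1 (c + τ)) * (Real.cosh c + Real.cosh τ)
    + (stg (c - τ) + stg (c + τ)) * Real.sinh c
noncomputable def stF2 (τ c : ℝ) : ℝ :=
  (stg2 (c - τ) + stg2 (c + τ)) * (Real.cosh c + Real.cosh τ)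
    + 2 * (stg1 (c - τ) + stg1 (c + τ)) * Real.sinh c
    + (stg (c - τ) + stg (c + τ)) * Real.cosh c

lemma stF2_nonneg (τ c : ℝ) : 0 ≤ stF2 τ c := by
  set a := c - τ with ha
  set b := c + τ with hb
  have h1 : Real.cosh c + Real.cosh τ = 2 * Real.cosh (a/2) * Real.cosh (b/2) := by
    have e1 : c = a/2 + b/2 := by rw [ha, hb]; ring
    have e2 : τ = b/2 - a/2 := by rw [ha, hb]; ring
    rw [e1, e2, Real.cosh_add, Real.cosh_sub]; ring
  have h2 : Real.sinh c = Real.sinh (a/2) * Real.cosh (b/2) + Real.cosh (a/2) * Real.sinh (b/2) := by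
    have e1 : c = a/2 + b/2 := by rw [ha, hb]; ring
    rw [e1, Real.sinh_add]
  have h3 : Real.cosh c = Real.cosh (a/2) * Real.cosh (b/2) + Real.sinh (a/2) * Real.sinh (b/2) := by
    have e1 : c = a/2 + b/2 := by rw [ha, hb]; ring
    rw [e1, Real.cosh_add]
  have key : stF2 τ c = (2 * stg2 a * (Real.cosh (a/2) * Real.cosh (b/2))
      + 2 * stg1 a * (Real.sinh (a/2) * Real.cosh (b/2) + Real.cosh (a/2) * Real.sinh (b/2))
      + stg a * (Real.cosh (a/2) * Real.cosh (b/2) + Real.sinh (a/2) * Real.sinh (b/2)))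
      + (2 * stg2 b * (Real.cosh (b/2) * Real.cosh (a/2))
      + 2 * stg1 b * (Real.sinh (b/2) * Real.cosh (a/2) + Real.cosh (b/2) * Real.sinh (a/2))
      + stg b * (Real.cosh (b/2) * Real.cosh (a/2) + Real.sinh (b/2) * Real.sinh (a/2))) := by
    rw [stF2, h1, h2, h3]; ring
  rw [key]
  exact add_nonneg (st_term a b) (st_term b a)

lemma st_hF (τ c : ℝ) : HasDerivAt (stF τ) (stF1 τ c) c := by
  have h1 : HasDerivAt (fun c : ℝ => stg (c - τ)) (stg1 (c - τ)) c := by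
    simpa [Function.comp_def] using (st_hg (c - τ)).comp c ((hasDerivAt_id c).sub_const τ)
  have h2 : HasDerivAt (fun c : ℝ => stg (c + τ)) (stg1 (c + τ)) c := by
    simpa [Function.comp_def] using (st_hg (c + τ)).comp c ((hasDerivAt_id c).add_const τ)
  have hK : HasDerivAt (fun c : ℝ => Real.cosh c + Real.cosh τ) (Real.sinh c) c :=
    (Real.hasDerivAt_cosh c).add_const _
  have := (h1.add h2).mul hK
  refine this.congr_deriv ?_
  rfl

lemma st_hF1 (τ c : ℝ) : HasDerivAt (stF1 τ) (stF2 τ c) c := by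
  have h1 : HasDerivAt (fun c : ℝ => stg (c - τ)) (stg1 (c - τ)) c := by
    simpa [Function.comp_def] using (st_hg (c - τ)).comp c ((hasDerivAt_id c).sub_const τ)
  have h2 : HasDerivAt (fun c : ℝ => stg (c + τ)) (stg1 (c + τ)) c := by
    simpa [Function.comp_def] using (st_hg (c + τ)).comp c ((hasDerivAt_id c).add_const τ)
  have h1' : HasDerivAt (fun c : ℝ => stg1 (c - τ)) (stg2 (c - τ)) c := by
    simpa [Function.comp_def] using (st_hg1 (c - τ)).comp c ((hasDerivAt_id c).sub_const τ)
  have h2' : HasDerivAt (fun c : ℝ => stg1 (c + τ)) (stg2 (c + τ)) c := by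
    simpa [Function.comp_def] using (st_hg1 (c + τ)).comp c ((hasDerivAt_id c).add_const τ)
  have hK : HasDerivAt (fun c : ℝ => Real.cosh c + Real.cosh τ) (Real.sinh c) c :=
    (Real.hasDerivAt_cosh c).add_const _
  have hS : HasDerivAt Real.sinh (Real.cosh c) c := Real.hasDerivAt_sinh c
  have := ((h1'.add h2').mul hK).add ((h1.add h2).mul hS)
  refine this.congr_deriv ?_
  try (simp only [stF2, Pi.add_apply]; ring)

lemma stF1_nonneg (τ c : ℝ) (hc : 0 ≤ c) : 0 ≤ stF1 τ c := by
  have hmono : Monotone (stF1 τ) := by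
    apply monotone_of_deriv_nonneg
    · exact fun x => (st_hF1 τ x).differentiableAt
    · intro x
      rw [(st_hF1 τ x).deriv]
      exact stF2_nonneg τ x
  have h0 : stF1 τ 0 = 0 := by
    have e1 : (0:ℝ) - τ = -τ := by ring
    simp [stF1, e1, stg1_odd τ]
  calc (0:ℝ) = stF1 τ 0 := h0.symm
    _ ≤ stF1 τ c := hmono hc

lemma stF_even (τ c : ℝ) : stF τ (-c) = stF τ c := by
  have e1 : -c - τ = -(c + τ) := by ring
  have e2 : -c + τ = -(c - τ) := by ring
  rw [stF, stF, e1, e2, stg_even, stg_even, Real.cosh_neg]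
  ring

lemma st_CORE (τ c : ℝ) :
    2 * stg τ * (Real.cosh τ + 1) ≤ (stg (c - τ) + stg (c + τ)) * (Real.cosh c + Real.cosh τ) := by
  have key : ∀ d : ℝ, 0 ≤ d → stF τ 0 ≤ stF τ d := by
    intro d hd
    have hmono : MonotoneOn (stF τ) (Set.Ici 0) := by
      apply monotoneOn_of_deriv_nonneg (convex_Ici 0)
      · exact fun x _ => ((st_hF τ x).differentiableAt.continuousAt).continuousWithinAt
      · intro x hx
        exact ((st_hF τ x).differentiableAt).differentiableWithinAt
      · intro x hx
        rw [(st_hF τ x).deriv]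
        rw [interior_Ici] at hx
        exact stF1_nonneg τ x (le_of_lt hx)
    exact hmono (by simp) (by simpa using hd) hd
  have h0 : stF τ 0 = 2 * stg τ * (Real.cosh τ + 1) := by
    have e1 : (0:ℝ) - τ = -τ := by ring
    simp [stF, e1, stg_even τ]
    ring
  have hmain : stF τ 0 ≤ stF τ c := by
    rcases le_or_gt 0 c with h | h
    · exact key c h
    · have h2 := key (-c) (by linarith)
      rwa [stF_even] at h2
  rw [h0] at hmain
  exact hmain



lemma st_ln2_pos : (0:ℝ) < Real.log 2 := Real.log_pos one_lt_two

lemma H2_eq (x : ℝ) : H2 x = Real.binEntropy x / Real.log 2 := by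
  rw [H2, Real.binEntropy, Real.logb, Real.logb, Real.log_inv, Real.log_inv]
  ring

lemma H2_pos {x : ℝ} (h0 : 0 < x) (h1 : x < 1) : 0 < H2 x := by
  rw [H2_eq]
  exact div_pos (Real.binEntropy_pos h0 h1) st_ln2_pos

lemma H2_zero : H2 0 = 0 := by rw [H2_eq, Real.binEntropy_zero, zero_div]

lemma H2_mono {x y : ℝ} (hx : 0 ≤ x) (hxy : x ≤ y) (hy : y ≤ 1/2) : H2 x ≤ H2 y := by
  rw [H2_eq, H2_eq]
  have hb : Real.binEntropy x ≤ Real.binEntropy y := by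
    apply Real.binEntropy_strictMonoOn.monotoneOn _ _ hxy
    · exact Set.mem_Icc.2 ⟨hx, by rw [show ((2:ℝ))⁻¹ = 1/2 by norm_num]; linarith⟩
    · exact Set.mem_Icc.2 ⟨by linarith, by rw [show ((2:ℝ))⁻¹ = 1/2 by norm_num]; linarith⟩
  gcongr

lemma H2_cont : Continuous H2 := by
  have : H2 = fun x => Real.binEntropy x / Real.log 2 := funext H2_eq
  rw [this]
  exact Real.binEntropy_continuous.div_const _

lemma L_strictMono : StrictMonoOn L (Set.Ico 0 (1/2 : ℝ)) := by
  intro p hp q hq hpq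
  simp only [Set.mem_Ico] at hp hq
  rcases eq_or_lt_of_le hp.1 with h0 | h0
  · have hq0 : 0 < q := by rw [← h0] at hpq; exact hpq
    have h1 : 0 < H2 q := H2_pos hq0 (by linarith [hq.2])
    have h2 : (0:ℝ) < 1 - 2 * q := by linarith [hq.2]
    rw [L, L, ← h0, H2_zero]
    have : (2:ℝ) * 0 / (1 - 2 * 0) = 0 := by norm_num
    rw [this]
    positivity
  · have hH : H2 p ≤ H2 q := H2_mono h0.le hpq.le (by linarith [hq.2])
    have hHp : 0 < H2 p := H2_pos h0 (by linarith [hp.2])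
    have h2q : (0:ℝ) < 1 - 2 * q := by linarith [hq.2]
    have h2p : 1 - 2 * q < 1 - 2 * p := by linarith
    rw [L, L, div_lt_div_iff₀ (by linarith) h2q]
    nlinarith



lemma L_surj {s : ℝ} (hs : 0 ≤ s) : ∃ x ∈ Set.Ico 0 (1/2 : ℝ), L x = s := by
  have hε : 0 < H2 (1/4) := H2_pos (by norm_num) (by norm_num)
  set ε := H2 (1/4) with hεd
  set m := min (1/4 : ℝ) (ε / (s + 1)) with hm
  have hm0 : 0 < m := lt_min (by norm_num) (by positivity)
  have hm4 : m ≤ 1/4 := min_le_left _ _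
  set r := 1/2 - m with hr
  have hr4 : (1/4 : ℝ) ≤ r := by rw [hr]; linarith
  have hr2 : r < 1/2 := by rw [hr]; linarith
  have hH2r : ε ≤ H2 r := H2_mono (by norm_num) hr4 hr2.le
  have hLr : s ≤ L r := by
    have h1 : 1 - 2 * r = 2 * m := by rw [hr]; ring
    have h2 : m ≤ ε / (s + 1) := min_le_right _ _
    have h3 : m * (s + 1) ≤ ε := by
      rw [← le_div_iff₀ (by linarith)]; exact h2
    rw [L, h1]
    rw [le_div_iff₀ (by linarith)]
    nlinarith
  have hcont : ContinuousOn L (Set.Icc 0 r) := by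
    have : ∀ x ∈ Set.Icc (0:ℝ) r, (1 : ℝ) - 2 * x ≠ 0 := by
      intro x hx
      rw [Set.mem_Icc] at hx
      have : x < 1/2 := lt_of_le_of_lt hx.2 hr2
      intro h; linarith [this]
    exact ((continuous_const.mul H2_cont).continuousOn).div
      ((continuous_const.sub (continuous_const.mul continuous_id)).continuousOn) this
  have hL0 : L 0 = 0 := by rw [L, H2_zero]; norm_num
  have hmem : s ∈ Set.Icc (L 0) (L r) := by
    rw [hL0]; exact ⟨hs, hLr⟩
  obtain ⟨x, hx, hLx⟩ := intermediate_value_Icc (le_trans (by norm_num) hr4 : (0:ℝ) ≤ r) hcont hmem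
  rw [Set.mem_Icc] at hx
  exact ⟨x, Set.mem_Ico.2 ⟨hx.1, lt_of_le_of_lt hx.2 hr2⟩, hLx⟩

lemma J_anti {x y : ℝ} (hx : 0 < x) (hxy : x ≤ y) (hy : y < 1) : J y ≤ J x := by
  have hy0 : 0 < y := lt_of_lt_of_le hx hxy
  have h1 : (0:ℝ) < (1 - y) / y := by
    apply div_pos; linarith; exact hy0
  have h2 : (1 - y) / y ≤ (1 - x) / x := by
    rw [div_le_div_iff₀ hy0 hx]
    nlinarith
  rw [J, J]
  exact Real.logb_le_logb_of_le (by norm_num) h1 h2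

lemma H2_param (t : ℝ) : H2 (1 / (1 + Real.exp t)) = stg t / Real.log 2 := by
  have hy : (0:ℝ) < Real.exp t := Real.exp_pos t
  have h1 : (0:ℝ) < 1 + Real.exp t := by positivity
  rw [H2_eq]
  congr 1
  rw [Real.binEntropy]
  have e1 : ((1:ℝ) / (1 + Real.exp t))⁻¹ = 1 + Real.exp t := by
    rw [one_div, inv_inv]
  have e2 : (1:ℝ) - 1 / (1 + Real.exp t) = Real.exp t / (1 + Real.exp t) := by
    field_simp
    ring
  have e3 : (Real.exp t / (1 + Real.exp t))⁻¹ = (1 + Real.exp t) / Real.exp t := by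
    rw [inv_div]
  rw [e1, e2, e3, Real.log_div (ne_of_gt h1) (ne_of_gt hy), Real.log_exp, stg]
  field_simp
  ring

lemma x_param {u : ℝ} (h0 : 0 < u) (h1 : u < 1) :
    1 / (1 + Real.exp (Real.log ((1 - u) / u))) = u := by
  rw [Real.exp_log (div_pos (by linarith) h0)]
  field_simp
  ring

lemma st_DIFF (c τ : ℝ) : 1 / (1 + Real.exp (c - τ)) - 1 / (1 + Real.exp (c + τ))
    = Real.sinh τ / (Real.cosh c + Real.cosh τ) := by
  have h1 : (0:ℝ) < Real.exp c := Real.exp_pos c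
  have h2 : (0:ℝ) < Real.exp τ := Real.exp_pos τ
  have hc : (0:ℝ) < Real.cosh c + Real.cosh τ := by positivity
  rw [Real.sinh_eq, Real.cosh_eq, Real.cosh_eq, Real.exp_sub, Real.exp_add,
    Real.exp_neg, Real.exp_neg]
  field_simp
  ring

lemma st_v0 (τ : ℝ) : 1 - 2 * (1 / (1 + Real.exp τ)) = Real.sinh τ / (Real.cosh τ + 1) := by
  have h2 : (0:ℝ) < Real.exp τ := Real.exp_pos τ
  rw [Real.sinh_eq, Real.cosh_eq, Real.exp_neg]
  field_simp
  ring

lemma st_Jv0 (τ : ℝ) : J (1 / (1 + Real.exp τ)) = τ / Real.log 2 := by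
  have h2 : (0:ℝ) < Real.exp τ := Real.exp_pos τ
  have h1 : (0:ℝ) < 1 + Real.exp τ := by positivity
  have e : (1 - 1 / (1 + Real.exp τ)) / (1 / (1 + Real.exp τ)) = Real.exp τ := by
    field_simp
    ring
  rw [J, e, Real.logb, Real.log_exp]



lemma st_main {u w : ℝ} (hw0 : 0 < w) (hwu : w < u) (hu1 : u < 1) :
    (1 / 2) * (u - w) * (J w - J u) ≥
      |u - w| * J (Linv ((H2 u + H2 w) / |u - w|)) := by
  have hu0 : 0 < u := hw0.trans hwu
  have hw1 : w < 1 := hwu.trans hu1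
  have habs : |u - w| = u - w := abs_of_pos (by linarith)
  set a := Real.log ((1 - u) / u) with ha
  set b := Real.log ((1 - w) / w) with hb
  have hab : a < b := by
    apply Real.log_lt_log (div_pos (by linarith) hu0)
    rw [div_lt_div_iff₀ hu0 hw0]
    nlinarith
  set τ := (b - a) / 2 with hτd
  set c := (a + b) / 2 with hcd
  have hτ : 0 < τ := by rw [hτd]; linarith
  have hac : c - τ = a := by rw [hτd, hcd]; ring
  have hbc : c + τ = b := by rw [hτd, hcd]; ring
  set v₀ := 1 / (1 + Real.exp τ) with hv₀
  have hexpτ : 1 < Real.exp τ := by rw [← Real.exp_zero]; exact Real.exp_lt_exp.2 hτ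
  have hv0pos : 0 < v₀ := by rw [hv₀]; positivity
  have hv0lt : v₀ < 1/2 := by
    rw [hv₀, div_lt_div_iff₀ (by positivity) (by norm_num)]
    linarith
  have hu_eq : u = 1 / (1 + Real.exp a) := (x_param hu0 hu1).symm
  have hw_eq : w = 1 / (1 + Real.exp b) := (x_param hw0 hw1).symm
  have hH2u : H2 u = stg a / Real.log 2 := by rw [hu_eq]; exact H2_param a
  have hH2w : H2 w = stg b / Real.log 2 := by rw [hw_eq]; exact H2_param b
  have hKpos : 0 < Real.cosh c + Real.cosh τ := by positivity
  have hsinh : 0 < Real.sinh τ := Real.sinh_pos_iff.2 hτ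
  have hdiff : u - w = Real.sinh τ / (Real.cosh c + Real.cosh τ) := by
    rw [hu_eq, hw_eq, ← hac, ← hbc]
    exact st_DIFF c τ
  have hH2v0 : H2 v₀ = stg τ / Real.log 2 := H2_param τ
  have hLv₀ : L v₀ = 2 * stg τ * (Real.cosh τ + 1) / (Real.sinh τ * Real.log 2) := by
    have hs' : Real.sinh τ ≠ 0 := ne_of_gt hsinh
    have hc' : Real.cosh τ + 1 ≠ 0 := by positivity
    rw [L, hH2v0, st_v0 τ]
    rw [div_eq_div_iff (ne_of_gt (div_pos hsinh (by positivity : (0:ℝ) < Real.cosh τ + 1))) (ne_of_gt (mul_pos hsinh st_ln2_pos))]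
    field_simp
  -- core inequality
  have hcore : (u - w) * L v₀ ≤ H2 u + H2 w := by
    rw [hdiff, hLv₀, hH2u, hH2w]
    have e1 : Real.sinh τ / (Real.cosh c + Real.cosh τ)
        * (2 * stg τ * (Real.cosh τ + 1) / (Real.sinh τ * Real.log 2))
        = 2 * stg τ * (Real.cosh τ + 1) / ((Real.cosh c + Real.cosh τ) * Real.log 2) := by
      field_simp
    rw [e1]
    have e2 : stg a / Real.log 2 + stg b / Real.log 2 = (stg a + stg b) / Real.log 2 := by
      ring
    rw [e2, div_le_div_iff₀ (by positivity) st_ln2_pos]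
    have h := st_CORE τ c
    rw [hac, hbc] at h
    have e3 : (stg a + stg b) * ((Real.cosh c + Real.cosh τ) * Real.log 2)
        = ((stg a + stg b) * (Real.cosh c + Real.cosh τ)) * Real.log 2 := by ring
    rw [e3]
    exact mul_le_mul_of_nonneg_right h st_ln2_pos.le
  set s := (H2 u + H2 w) / |u - w| with hs_def
  have hspos : 0 < s := by
    rw [hs_def, habs]
    exact div_pos (by linarith [H2_pos hu0 hu1, H2_pos hw0 hw1]) (by linarith)
  obtain ⟨x0, hx0, hLx0⟩ := L_surj hspos.le
  have hmem : Linv s ∈ Set.Ico (0:ℝ) (1/2) := Function.invFunOn_mem ⟨x0, hx0, hLx0⟩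
  have heq : L (Linv s) = s := Function.invFunOn_eq ⟨x0, hx0, hLx0⟩
  have hLv₀_le : L v₀ ≤ s := by
    rw [hs_def, habs, le_div_iff₀ (by linarith : (0:ℝ) < u - w)]
    calc L v₀ * (u - w) = (u - w) * L v₀ := by ring
      _ ≤ H2 u + H2 w := hcore
  have hv₀v : v₀ ≤ Linv s := by
    by_contra hcon
    push_neg at hcon
    have := L_strictMono hmem (Set.mem_Ico.2 ⟨hv0pos.le, hv0lt⟩) hcon
    rw [heq] at this
    linarith
  have hJv : J (Linv s) ≤ J v₀ := by
    apply J_anti hv0pos hv₀v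
    have := hmem.2
    linarith
  have hJv₀ : J v₀ = τ / Real.log 2 := st_Jv0 τ
  have hJwu : J w - J u = 2 * τ / Real.log 2 := by
    rw [J, J, Real.logb, Real.logb, ← ha, ← hb, hτd]
    ring
  have h1 : |u - w| * J (Linv s) ≤ (u - w) * (τ / Real.log 2) := by
    rw [habs]
    exact mul_le_mul_of_nonneg_left (hJv.trans_eq hJv₀) (by linarith)
  have h2 : (1 / 2) * (u - w) * (J w - J u) = (u - w) * (τ / Real.log 2) := by
    rw [hJwu]; ring
  rw [ge_iff_le, h2]
  exact h1

lemma st_part1 : ∀ u w : ℝ, u ∈ Set.Ioo (0 : ℝ) 1 → w ∈ Set.Ioo (0 : ℝ) 1 → u ≠ w →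
    (1 / 2) * (u - w) * (J w - J u) ≥
      |u - w| * J (Linv ((H2 u + H2 w) / |u - w|)) := by
  intro u w hu hw hne
  rcases lt_or_gt_of_ne hne with h | h
  · have hmain := st_main hu.1 h hw.2
    rw [abs_sub_comm w u, add_comm (H2 w) (H2 u)] at hmain
    rw [ge_iff_le, show (1 / 2) * (u - w) * (J w - J u)
      = (1 / 2) * (w - u) * (J u - J w) from by ring]
    exact hmain
  · exact st_main hw.1 h hu.2

theorem stmt18 :
    (∀ u w : ℝ, u ∈ Set.Ioo (0 : ℝ) 1 → w ∈ Set.Ioo (0 : ℝ) 1 → u ≠ w →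
      (1 / 2) * (u - w) * (J w - J u) ≥
        |u - w| * J (Linv ((H2 u + H2 w) / |u - w|))) ∧
    (∀ u w : ℝ, u ∈ Set.Ioo (0 : ℝ) 1 → w ∈ Set.Ioo (0 : ℝ) 1 → 0 ≤ kappa u w) := by
  constructor
  · exact st_part1
  · intro u w hu hw
    by_cases h : u = w
    · simp [kappa, h]
    · rw [kappa, if_neg h]
      have h1 := st_part1 u w hu hw h
      have e : (u - w) * (J w - J u) / 2 = (1 / 2) * (u - w) * (J w - J u) := by ring
      rw [ge_iff_le] at h1
      linarith [e ▸ h1]
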